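/- Let v ∈ ℝ and let m : ℂ → ℂ satisfy m(λ) + λ⁻¹ + v λ⁻² + (2 + v²) λ⁻³ = O(|λ|⁻⁴) as |λ| → ∞. Define f(z) = −m(√2 (z + 1/z)) for z near 0, z ≠ 0. Then f(z) − z/√2 − (v/2) z² − (v²/(2√2)) z³ = O(|z|⁴) as z → 0. -/

import Mathlib

open Asymptotics Topology Filter

private lemma stmt6_alg (s z v : ℂ) (hz : z ≠ 0) (hw : (1:ℂ) + z ^ 2 ≠ 0) (hs0 : s ≠ 0) :
    z / (s * (1 + z ^ 2)) + v * (z / (s * (1 + z ^ 2))) ^ 2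
      + (s ^ 2 + v ^ 2) * (z / (s * (1 + z ^ 2))) ^ 3
      - (z / s + (v / s ^ 2) * z ^ 2 + (v ^ 2 / (s ^ 2 * s)) * z ^ 3)
    = z ^ 4 * (-((s ^ 2 * z * (1 + (1 + z ^ 2)) + v * s * (1 + z ^ 2) * (1 + (1 + z ^ 2))
        + v ^ 2 * z * ((1 + z ^ 2) ^ 2 + (1 + z ^ 2) + 1)) / (s ^ 3 * (1 + z ^ 2) ^ 3))) := by
  have hD : s ^ 3 * (1 + z ^ 2) ^ 3 ≠ 0 := mul_ne_zero (pow_ne_zero _ hs0) (pow_ne_zero _ hw)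
  apply mul_left_cancel₀ hD
  have e1 : s ^ 3 * (1 + z ^ 2) ^ 3 * (z / (s * (1 + z ^ 2))) = z * (s ^ 2 * (1 + z ^ 2) ^ 2) := by
    field_simp
  have e2 : s ^ 3 * (1 + z ^ 2) ^ 3 * (v * (z / (s * (1 + z ^ 2))) ^ 2) = v * z ^ 2 * (s * (1 + z ^ 2)) := by
    field_simp
  have e3 : s ^ 3 * (1 + z ^ 2) ^ 3 * ((s ^ 2 + v ^ 2) * (z / (s * (1 + z ^ 2))) ^ 3) = (s ^ 2 + v ^ 2) * z ^ 3 := by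
    field_simp
  have e4 : s ^ 3 * (1 + z ^ 2) ^ 3 * (z / s) = z * (s ^ 2 * (1 + z ^ 2) ^ 3) := by
    field_simp
  have e5 : s ^ 3 * (1 + z ^ 2) ^ 3 * (v / s ^ 2 * z ^ 2) = v * z ^ 2 * (s * (1 + z ^ 2) ^ 3) := by
    field_simp
  have e6 : s ^ 3 * (1 + z ^ 2) ^ 3 * (v ^ 2 / (s ^ 2 * s) * z ^ 3) = v ^ 2 * z ^ 3 * (1 + z ^ 2) ^ 3 := by
    field_simp
  have e7 : s ^ 3 * (1 + z ^ 2) ^ 3 * (z ^ 4 * (-((s ^ 2 * z * (1 + (1 + z ^ 2)) + v * s * (1 + z ^ 2) * (1 + (1 + z ^ 2))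
        + v ^ 2 * z * ((1 + z ^ 2) ^ 2 + (1 + z ^ 2) + 1)) / (s ^ 3 * (1 + z ^ 2) ^ 3))))
      = -(z ^ 4 * (s ^ 2 * z * (1 + (1 + z ^ 2)) + v * s * (1 + z ^ 2) * (1 + (1 + z ^ 2))
        + v ^ 2 * z * ((1 + z ^ 2) ^ 2 + (1 + z ^ 2) + 1))) := by
    field_simp
  linear_combination e1 + e2 + e3 - e4 - e5 - e6 - e7

theorem stmt6 (v : ℝ) (m f : ℂ → ℂ)
    (hm : (fun lam => m lam + lam⁻¹ + (v : ℂ) * (lam⁻¹) ^ 2 + (2 + (v : ℂ) ^ 2) * (lam⁻¹) ^ 3)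
      =O[Bornology.cobounded ℂ] fun lam => (lam⁻¹) ^ 4)
    (hf : ∀ᶠ z in 𝓝[≠] (0 : ℂ), f z = -m ((Real.sqrt 2 : ℂ) * (z + z⁻¹))) :
    (fun z => f z - z / (Real.sqrt 2 : ℂ) - ((v : ℂ) / 2) * z ^ 2
        - ((v : ℂ) ^ 2 / (2 * (Real.sqrt 2 : ℂ))) * z ^ 3)
      =O[𝓝[≠] (0 : ℂ)] fun z => z ^ 4 := by
  set l : Filter ℂ := 𝓝[≠] (0 : ℂ) with hl
  set s : ℂ := (Real.sqrt 2 : ℂ) with hsdef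
  have hs2 : s ^ 2 = 2 := by
    rw [hsdef, ← Complex.ofReal_pow, Real.sq_sqrt (by norm_num : (0:ℝ) ≤ 2)]
    norm_num
  have hs0 : s ≠ 0 := by
    intro h
    rw [h] at hs2
    norm_num at hs2
  set φ : ℂ → ℂ := fun z => s * (z + z⁻¹) with hφdef
  -- tendsto to cobounded
  have hnorm : Tendsto (fun z : ℂ => ‖z‖) l (𝓝[>] (0:ℝ)) := by
    apply tendsto_nhdsWithin_of_tendsto_nhds_of_eventually_within
    · have : Tendsto (fun z : ℂ => ‖z‖) (𝓝 0) (𝓝 ‖(0:ℂ)‖) := (continuous_norm).tendsto 0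
      simpa using this.mono_left nhdsWithin_le_nhds
    · filter_upwards [self_mem_nhdsWithin] with z (hz : z ≠ 0)
      simpa using hz
  have hinvlim : Tendsto (fun z : ℂ => ‖z‖⁻¹) l atTop :=
    tendsto_inv_nhdsGT_zero.comp hnorm
  have hφ : Tendsto φ l (Bornology.cobounded ℂ) := by
    rw [← tendsto_norm_atTop_iff_cobounded]
    have hlow : Tendsto (fun z : ℂ => Real.sqrt 2 * (‖z‖⁻¹ - 1)) l atTop :=
      (tendsto_atTop_add_const_right _ (-1) hinvlim).const_mul_atTop
        (by positivity : (0:ℝ) < Real.sqrt 2)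
    apply tendsto_atTop_mono' l _ hlow
    have hball : ∀ᶠ z : ℂ in l, ‖z‖ ≤ 1 := by
      have : ∀ᶠ z : ℂ in 𝓝 (0:ℂ), ‖z‖ ≤ 1 := by
        have := Metric.ball_mem_nhds (0:ℂ) (by norm_num : (0:ℝ) < 1)
        filter_upwards [this] with z hz
        simp only [Metric.mem_ball, dist_zero_right] at hz
        exact hz.le
      exact this.filter_mono nhdsWithin_le_nhds
    filter_upwards [hball] with z hz
    have h1 : ‖z‖⁻¹ - 1 ≤ ‖z + z⁻¹‖ := by
      have h2 : ‖z⁻¹‖ - ‖z‖ ≤ ‖z + z⁻¹‖ := by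
        have := norm_sub_norm_le z⁻¹ (-z)
        simpa [sub_neg_eq_add, add_comm] using this
      rw [norm_inv] at h2
      linarith
    have : ‖φ z‖ = Real.sqrt 2 * ‖z + z⁻¹‖ := by
      rw [hφdef]
      simp [norm_mul, hsdef, Complex.norm_real, abs_of_nonneg (Real.sqrt_nonneg 2)]
    rw [this]
    have := Real.sqrt_nonneg 2
    nlinarith
  -- eventual facts
  have hev0 : ∀ᶠ z : ℂ in l, z ≠ 0 := by
    filter_upwards [self_mem_nhdsWithin] with z hz; exact hz
  have hev1 : ∀ᶠ z : ℂ in l, (1:ℂ) + z ^ 2 ≠ 0 := by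
    have hc : ContinuousAt (fun z : ℂ => 1 + z ^ 2) 0 := by fun_prop
    have := hc.eventually_ne (by norm_num : (1:ℂ) + 0 ^ 2 ≠ 0)
    exact this.filter_mono nhdsWithin_le_nhds
  have hinv : ∀ z : ℂ, z ≠ 0 → (1:ℂ) + z ^ 2 ≠ 0 → (φ z)⁻¹ = z / (s * (1 + z ^ 2)) := by
    intro z hz hw
    have hφz : φ z = s * (1 + z ^ 2) / z := by
      show s * (z + z⁻¹) = _
      field_simp
      ring
    rw [hφz, inv_div]
  -- the composed big-O
  have h1 : (fun z => m (φ z) + (φ z)⁻¹ + (v:ℂ) * ((φ z)⁻¹) ^ 2 + (2 + (v:ℂ) ^ 2) * ((φ z)⁻¹) ^ 3)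
      =O[l] fun z => ((φ z)⁻¹) ^ 4 := hm.comp_tendsto hφ
  -- bound ((φ z)⁻¹)^4 by z^4
  set c : ℂ → ℂ := fun z => (s * (1 + z ^ 2))⁻¹ with hcdef
  have hc : Tendsto c l (𝓝 (c 0)) := by
    have : ContinuousAt c 0 := by
      apply ContinuousAt.inv₀ (by fun_prop)
      simp [hcdef]
      exact hs0
    exact this.continuousWithinAt.tendsto
  have h2 : (fun z => ((φ z)⁻¹) ^ 4) =O[l] fun z : ℂ => z ^ 4 := by
    have he : (fun z => ((φ z)⁻¹) ^ 4) =ᶠ[l] fun z => z ^ 4 * (c z) ^ 4 := by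
      filter_upwards [hev0, hev1] with z hz hw
      rw [hinv z hz hw, hcdef, div_eq_mul_inv, mul_pow]
    refine he.trans_isBigO ?_
    have := (isBigO_refl (fun z : ℂ => z ^ 4) l).mul ((hc.isBigO_one ℂ).pow 4)
    simpa using this
  -- the polynomial correction
  set R : ℂ → ℂ := fun z =>
    -((s ^ 2 * z * (1 + (1 + z ^ 2)) + (v:ℂ) * s * (1 + z ^ 2) * (1 + (1 + z ^ 2))
        + (v:ℂ) ^ 2 * z * ((1 + z ^ 2) ^ 2 + (1 + z ^ 2) + 1)) / (s ^ 3 * (1 + z ^ 2) ^ 3))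
    with hRdef
  have hR : Tendsto R l (𝓝 (R 0)) := by
    have : ContinuousAt R 0 := by
      apply ContinuousAt.neg
      apply ContinuousAt.div (by fun_prop) (by fun_prop)
      simp
      exact hs0
    exact this.continuousWithinAt.tendsto
  have hRO : (fun z : ℂ => z ^ 4 * R z) =O[l] fun z : ℂ => z ^ 4 := by
    have := (isBigO_refl (fun z : ℂ => z ^ 4) l).mul (hR.isBigO_one ℂ)
    simpa using this
  -- key algebraic identity
  have key : ∀ z : ℂ, z ≠ 0 → (1:ℂ) + z ^ 2 ≠ 0 →
      (φ z)⁻¹ + (v:ℂ) * ((φ z)⁻¹) ^ 2 + (2 + (v:ℂ) ^ 2) * ((φ z)⁻¹) ^ 3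
        - (z / s + ((v:ℂ) / 2) * z ^ 2 + ((v:ℂ) ^ 2 / (2 * s)) * z ^ 3)
      = z ^ 4 * R z := by
    intro z hz hw
    rw [hinv z hz hw]
    have h2s : (2:ℂ) = s ^ 2 := hs2.symm
    rw [h2s]
    exact stmt6_alg s z v hz hw hs0
  -- assemble
  have heq : (fun z => f z - z / s - ((v:ℂ) / 2) * z ^ 2 - ((v:ℂ) ^ 2 / (2 * s)) * z ^ 3)
      =ᶠ[l] fun z =>
        -(m (φ z) + (φ z)⁻¹ + (v:ℂ) * ((φ z)⁻¹) ^ 2 + (2 + (v:ℂ) ^ 2) * ((φ z)⁻¹) ^ 3)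
        + z ^ 4 * R z := by
    filter_upwards [hf, hev0, hev1] with z hfz hz hw
    rw [hfz]
    have := key z hz hw
    rw [hφdef] at this ⊢
    rw [← this]
    ring
  calc (fun z => f z - z / s - ((v:ℂ) / 2) * z ^ 2 - ((v:ℂ) ^ 2 / (2 * s)) * z ^ 3)
      =O[l] fun z : ℂ => z ^ 4 := heq.trans_isBigO ((h1.neg_left.trans h2).add hRO)
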